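/- arXiv:1708.09772 — 6 statements merged into one kernel-verified Lean document; each statement's English description precedes it below -/
import Mathlib

section
/- Let n = q² + q + 1 with q a prime power, let D_{2n} be the dihedral group of order 2n, and let Δ be a difference set in Z/nZ. Then the Cayley graph of D_{2n} with respect to {t·r^σ : σ ∈ Δ} is a bipartite (q+1)-regular graph of girth at least 6 on 2(q²+q+1) vertices. -/
open DihedralGroup

/-- A difference set in `ℤ/nℤ`: every nonzero element is uniquely a difference `τ - σ`
of two elements of `Δ`. -/
def IsDifferenceSet {n : ℕ} (Δ : Finset (ZMod n)) : Prop :=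
  ∀ g : ZMod n, g ≠ 0 →
    ∃! στ : ZMod n × ZMod n, στ.1 ∈ Δ ∧ στ.2 ∈ Δ ∧ στ.2 - στ.1 = g

/-- The Cayley graph of the dihedral group `D_{2n}` with respect to the set
`{t·r^σ : σ ∈ Δ}` (here `t = sr 0` is a reflection, so `t·r^σ = sr 0 * r σ`). -/
def dihedralCayleyGraph (n : ℕ) (Δ : Finset (ZMod n)) : SimpleGraph (DihedralGroup n) :=
  SimpleGraph.fromRel (fun g h => ∃ σ ∈ Δ, h = g * (sr 0 * DihedralGroup.r σ))

lemma dcg_adj_iff {n : ℕ} (Δ : Finset (ZMod n)) (g h : DihedralGroup n) :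
    (dihedralCayleyGraph n Δ).Adj g h ↔ ∃ σ ∈ Δ, h = g * sr σ := by
  have hsr : ∀ σ : ZMod n, sr 0 * DihedralGroup.r σ = sr σ := by
    intro σ; rw [sr_mul_r, zero_add]
  constructor
  · rintro ⟨hne, ⟨σ, hσ, rfl⟩ | ⟨σ, hσ, hg⟩⟩
    · exact ⟨σ, hσ, by rw [hsr]⟩
    · refine ⟨σ, hσ, ?_⟩
      rw [hsr] at hg
      rw [hg, mul_assoc, sr_mul_self, mul_one]
  · rintro ⟨σ, hσ, rfl⟩
    refine ⟨?_, Or.inl ⟨σ, hσ, by rw [hsr]⟩⟩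
    intro hcontra
    have : sr σ = 1 := by
      have h' := hcontra.symm
      rwa [mul_eq_left] at h'
    rw [one_def] at this; cases this

/-- Parity: rotations ↦ 0, reflections ↦ 1. -/
def dcgPar {n : ℕ} : DihedralGroup n → ZMod 2
  | DihedralGroup.r _ => 0
  | DihedralGroup.sr _ => 1

lemma dcgPar_mul_sr {n : ℕ} (g : DihedralGroup n) (σ : ZMod n) :
    dcgPar (g * sr σ) = dcgPar g + 1 := by
  cases g <;> simp [dcgPar, r_mul_sr, sr_mul_sr] <;> decide

lemma dcg_walk_parity {n : ℕ} {Δ : Finset (ZMod n)} {g h : DihedralGroup n}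
    (w : (dihedralCayleyGraph n Δ).Walk g h) :
    dcgPar h = dcgPar g + (w.length : ZMod 2) := by
  induction w with
  | nil => simp
  | cons a p ih =>
    obtain ⟨σ, hσ, rfl⟩ := (dcg_adj_iff _ _ _).1 a
    rw [SimpleGraph.Walk.length_cons, ih, dcgPar_mul_sr]
    push_cast
    ring

lemma dcg_cycle_even {n : ℕ} {Δ : Finset (ZMod n)} {v : DihedralGroup n}
    (w : (dihedralCayleyGraph n Δ).Walk v v) : 2 ∣ w.length := by
  have := dcg_walk_parity w
  rw [left_eq_add] at this
  exact (ZMod.natCast_eq_zero_iff _ _).1 this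

lemma dcg_card_diffset {n q : ℕ} (hn : n = q ^ 2 + q + 1) (hq2 : 2 ≤ q)
    {Δ : Finset (ZMod n)} (hΔ : IsDifferenceSet Δ) : Δ.card = q + 1 := by
  haveI : NeZero n := ⟨by omega⟩
  have hcard : Δ.offDiag.card = (Finset.univ.erase (0 : ZMod n)).card := by
    apply Finset.card_bij (fun p _ => p.2 - p.1)
    · intro p hp
      rw [Finset.mem_offDiag] at hp
      exact Finset.mem_erase.2 ⟨sub_ne_zero.2 (Ne.symm hp.2.2), Finset.mem_univ _⟩
    · intro p hp p' hp' hEq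
      rw [Finset.mem_offDiag] at hp hp'
      have hne : p.2 - p.1 ≠ 0 := sub_ne_zero.2 (Ne.symm hp.2.2)
      obtain ⟨u, _, huniq⟩ := hΔ _ hne
      have h1 := huniq p ⟨hp.1, hp.2.1, rfl⟩
      have h2 := huniq p' ⟨hp'.1, hp'.2.1, hEq.symm⟩
      rw [h1, h2]
    · intro g hg
      obtain ⟨hg0, -⟩ := Finset.mem_erase.1 hg
      obtain ⟨u, ⟨h1, h2, h3⟩, -⟩ := hΔ g hg0
      refine ⟨u, Finset.mem_offDiag.2 ⟨h1, h2, ?_⟩, h3⟩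
      intro heq
      exact hg0 (by rw [← h3, heq, sub_self])
  rw [Finset.offDiag_card, Finset.card_erase_of_mem (Finset.mem_univ _),
    Finset.card_univ, ZMod.card] at hcard
  set k := Δ.card with hk
  have hne : k ≠ 0 := by
    intro h0
    rw [h0] at hcard
    simp at hcard
    omega
  have hkk : k ≤ k * k := Nat.le_mul_of_pos_left k (Nat.pos_of_ne_zero hne)
  have hneOLD : True := trivial
  have heq : k * k = q ^ 2 + q + k := by
    have h2 : n - 1 = q ^ 2 + q := by omega
    rw [h2] at hcard
    calc k * k = k * k - k + k := (Nat.sub_add_cancel hkk).symm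
    _ = q ^ 2 + q + k := by rw [hcard]
  have hle : ¬ k ≤ q := by
    intro h
    nlinarith [Nat.mul_le_mul h h]
  have hge : ¬ q + 2 ≤ k := by
    intro h
    nlinarith [Nat.mul_le_mul h (le_refl k), Nat.mul_le_mul (le_refl q) h]
  omega

lemma dcg_no_four_cycle {n : ℕ} {Δ : Finset (ZMod n)} (hΔ : IsDifferenceSet Δ)
    {v : DihedralGroup n} (w : (dihedralCayleyGraph n Δ).Walk v v)
    (hw : w.IsCycle) : w.length ≠ 4 := by
  intro hl
  cases w with
  | nil => simp at hl
  | cons h1 p1 =>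
  cases p1 with
  | nil => simp at hl
  | cons h2 p2 =>
  cases p2 with
  | nil => simp at hl
  | cons h3 p3 =>
  cases p3 with
  | nil => simp at hl
  | cons h4 p4 =>
  cases p4 with
  | cons h5 p5 => simp [SimpleGraph.Walk.length_cons] at hl
  | nil =>
  -- vertices: v, a, b, c, v
  have hnodup := hw.support_nodup
  simp [SimpleGraph.Walk.support_cons, List.nodup_cons] at hnodup
  obtain ⟨σ1, hσ1, rfl⟩ := (dcg_adj_iff _ _ _).1 h1
  obtain ⟨σ2, hσ2, rfl⟩ := (dcg_adj_iff _ _ _).1 h2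
  obtain ⟨σ3, hσ3, rfl⟩ := (dcg_adj_iff _ _ _).1 h3
  obtain ⟨σ4, hσ4, h4eq⟩ := (dcg_adj_iff _ _ _).1 h4
  -- extract distinctness
  have hbv : v * sr σ1 * sr σ2 ≠ v := by tauto
  have hca : v * sr σ1 * sr σ2 * sr σ3 ≠ v * sr σ1 := by tauto
  -- group computation
  have h5 : v * (sr σ1 * (sr σ2 * (sr σ3 * sr σ4))) = v * 1 := by
    rw [mul_one]
    have := h4eq.symm
    rw [mul_assoc, mul_assoc, mul_assoc] at this
    exact this
  have h6 : sr σ1 * (sr σ2 * (sr σ3 * sr σ4)) = (1 : DihedralGroup n) :=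
    mul_left_cancel h5
  rw [sr_mul_sr, sr_mul_r, sr_mul_sr, one_def] at h6
  have hkey : σ2 + (σ4 - σ3) - σ1 = 0 := by
    exact DihedralGroup.r.inj h6
  -- σ2 - σ1 ≠ 0
  have hσne : σ2 - σ1 ≠ 0 := by
    intro h
    apply hbv
    have : σ2 = σ1 := by
      have := sub_eq_zero.1 h
      exact this
    rw [this, mul_assoc, sr_mul_self, mul_one]
  obtain ⟨u, -, huniq⟩ := hΔ _ hσne
  have e1 := huniq (σ1, σ2) ⟨hσ1, hσ2, rfl⟩
  have e2 := huniq (σ4, σ3) ⟨hσ4, hσ3, by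
    have : σ3 - σ4 = σ2 - σ1 := by
      have h' : σ2 + (σ4 - σ3) = σ1 := by
        have := sub_eq_zero.1 hkey
        exact this
      linear_combination -h'
    exact this⟩
  have e3 : (σ1, σ2) = ((σ4, σ3) : ZMod n × ZMod n) := e1.trans e2.symm
  have hσ32 : σ3 = σ2 := (Prod.ext_iff.1 e3).2.symm
  apply hca
  rw [hσ32, mul_assoc, sr_mul_self, mul_one]

/-- Let `n = q² + q + 1` with `q` a prime power and `Δ` a difference set in `ℤ/nℤ`.
Then the Cayley graph of `D_{2n}` with respect to `{t·r^σ : σ ∈ Δ}` is a bipartite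
`(q+1)`-regular graph of girth at least 6 on `2(q²+q+1)` vertices. -/
theorem dihedralCayleyGraph_incidence_graph (q n : ℕ)
    (hq : ∃ p k : ℕ, p.Prime ∧ 0 < k ∧ q = p ^ k) (hn : n = q ^ 2 + q + 1)
    (Δ : Finset (ZMod n)) (hΔ : IsDifferenceSet Δ) :
    (dihedralCayleyGraph n Δ).Colorable 2 ∧
    (∀ g : DihedralGroup n, Nat.card ((dihedralCayleyGraph n Δ).neighborSet g) = q + 1) ∧
    6 ≤ (dihedralCayleyGraph n Δ).egirth ∧
    Nat.card (DihedralGroup n) = 2 * (q ^ 2 + q + 1) := by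
  have hq2 : 2 ≤ q := by
    obtain ⟨p, k, hp, hk, rfl⟩ := hq
    calc 2 = 2 ^ 1 := rfl
    _ ≤ p ^ k := Nat.pow_le_pow_left hp.two_le k |>.trans' (Nat.pow_le_pow_right (by norm_num) hk) |>.trans (le_refl _)
  haveI : NeZero n := ⟨by omega⟩
  have hcardΔ : Δ.card = q + 1 := dcg_card_diffset hn hq2 hΔ
  refine ⟨?_, ?_, ?_, ?_⟩
  · -- 2-colorable
    exact ⟨SimpleGraph.Coloring.mk (fun g => dcgPar g) (by
      intro g h hadj
      obtain ⟨σ, hσ, rfl⟩ := (dcg_adj_iff _ _ _).1 hadj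
      show dcgPar g ≠ dcgPar (g * sr σ)
      rw [dcgPar_mul_sr]
      intro hcon
      have := left_eq_add.1 hcon
      exact one_ne_zero this)⟩
  · -- regularity
    intro g
    have hset : (dihedralCayleyGraph n Δ).neighborSet g = (fun σ => g * sr σ) '' ↑Δ := by
      ext h
      simp only [SimpleGraph.mem_neighborSet, dcg_adj_iff, Set.mem_image, Finset.mem_coe]
      constructor
      · rintro ⟨σ, hσ, rfl⟩; exact ⟨σ, hσ, rfl⟩
      · rintro ⟨σ, hσ, rfl⟩; exact ⟨σ, hσ, rfl⟩
    have hinj : Function.Injective (fun σ : ZMod n => g * sr σ) := by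
      intro a b hab
      simp only at hab
      have := mul_left_cancel hab
      exact DihedralGroup.sr.inj this
    rw [hset, Nat.card_coe_set_eq, Set.ncard_image_of_injective _ hinj,
      Set.ncard_coe_finset, hcardΔ]
  · -- girth
    rw [SimpleGraph.le_egirth]
    intro a w hw
    have h3 : 3 ≤ w.length := hw.three_le_length
    have h2 : 2 ∣ w.length := dcg_cycle_even w
    have h4 : w.length ≠ 4 := dcg_no_four_cycle hΔ w hw
    have : 6 ≤ w.length := by omega
    exact_mod_cast this
  · rw [DihedralGroup.nat_card, hn]
end

section
/- Let G be a group and {P_i : i ∈ I} a collection of subgroups such that P_i P_j ∩ P_k = {1} for all pairwise distinct i, j, k ∈ I, and P_i ∩ P_j = {1} for distinct i, j. Then the coset graph of G with respect to {P_i} has girth at least 8. -/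
open scoped Pointwise

/-- The coset graph of a group `G` with respect to a family of subgroups `P i`:
the bipartite graph on `G ⊔ (⋃ i, G/Pᵢ)` where `g ∈ G` is adjacent to the coset
`hPᵢ` iff `g ∈ hPᵢ` (i.e. the class of `g` in `G ⧸ P i` is that coset). -/
def cosetGraph {G : Type*} [Group G] {I : Type*} (P : I → Subgroup G) :
    SimpleGraph (G ⊕ (Σ i : I, G ⧸ P i)) :=
  SimpleGraph.fromRel (fun v w =>
    ∃ (g : G) (i : I), v = Sum.inl g ∧ w = Sum.inr ⟨i, (g : G ⧸ P i)⟩)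

section Aux

variable {G : Type*} [Group G] {I : Type*} {P : I → Subgroup G}

lemma cosetGraph_adj_cases {v w : G ⊕ (Σ i : I, G ⧸ P i)} (h : (cosetGraph P).Adj v w) :
    (∃ g i, v = Sum.inl g ∧ w = Sum.inr ⟨i, (g : G ⧸ P i)⟩) ∨
    (∃ g i, w = Sum.inl g ∧ v = Sum.inr ⟨i, (g : G ⧸ P i)⟩) := by
  rw [cosetGraph, SimpleGraph.fromRel_adj] at h
  exact h.2

lemma adj_inl {g : G} {y : G ⊕ (Σ i : I, G ⧸ P i)} (h : (cosetGraph P).Adj (Sum.inl g) y) :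
    ∃ i, y = Sum.inr ⟨i, (g : G ⧸ P i)⟩ := by
  rcases cosetGraph_adj_cases h with ⟨g', i, hv, hw⟩ | ⟨g', i, hv, hw⟩
  · cases hv; exact ⟨i, hw⟩
  · exact absurd hw (by simp)

lemma adj_inr {s : Σ i : I, G ⧸ P i} {y : G ⊕ (Σ i : I, G ⧸ P i)}
    (h : (cosetGraph P).Adj (Sum.inr s) y) :
    ∃ g, y = Sum.inl g ∧ ((g : G ⧸ P s.1) = s.2) := by
  rcases cosetGraph_adj_cases h with ⟨g', i, hv, hw⟩ | ⟨g', i, hv, hw⟩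
  · exact absurd hv (by simp)
  · obtain rfl : s = ⟨i, (g' : G ⧸ P i)⟩ := Sum.inr.inj hw
    exact ⟨g', hv, rfl⟩

/-- a coloring showing bipartiteness -/
lemma cosetGraph_walk_parity {u v : G ⊕ (Σ i : I, G ⧸ P i)} (w : (cosetGraph P).Walk u v) :
    (w.length : ZMod 2) =
      Sum.elim (fun _ => (0 : ZMod 2)) (fun _ => 1) u -
        Sum.elim (fun _ => (0 : ZMod 2)) (fun _ => 1) v := by
  induction w with
  | nil => simp
  | @cons a b c h w ih =>
    have hab : Sum.elim (fun _ => (0 : ZMod 2)) (fun _ => 1) a -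
        Sum.elim (fun _ => (0 : ZMod 2)) (fun _ => 1) b = 1 := by
      rcases cosetGraph_adj_cases h with ⟨g, i, rfl, rfl⟩ | ⟨g, i, rfl, rfl⟩ <;> simp <;> decide
    rw [SimpleGraph.Walk.length_cons]
    push_cast
    rw [ih]
    linear_combination -hab

lemma key4 (h2 : ∀ i j : I, i ≠ j → P i ⊓ P j = ⊥)
    {g₁ g₂ : G} {i j : I} {c₁ : G ⧸ P i} {c₂ : G ⧸ P j}
    (hg : g₁ ≠ g₂) (hc : (⟨i, c₁⟩ : Σ i : I, G ⧸ P i) ≠ ⟨j, c₂⟩)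
    (e1 : (g₁ : G ⧸ P i) = c₁) (e2 : (g₂ : G ⧸ P i) = c₁)
    (e3 : (g₁ : G ⧸ P j) = c₂) (e4 : (g₂ : G ⧸ P j) = c₂) : False := by
  rcases eq_or_ne i j with rfl | hij
  · exact hc (by rw [← e1, ← e3])
  · have hi : g₁⁻¹ * g₂ ∈ P i := QuotientGroup.eq.mp (e1.trans e2.symm)
    have hj : g₁⁻¹ * g₂ ∈ P j := QuotientGroup.eq.mp (e3.trans e4.symm)
    have hmem : g₁⁻¹ * g₂ ∈ P i ⊓ P j := ⟨hi, hj⟩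
    rw [h2 i j hij, Subgroup.mem_bot, inv_mul_eq_one] at hmem
    exact hg hmem

lemma key6 (h2 : ∀ i j : I, i ≠ j → P i ⊓ P j = ⊥)
    (h3 : ∀ i j k : I, i ≠ j → j ≠ k → i ≠ k →
      ∀ g : G, g ∈ (P i : Set G) * (P j : Set G) → g ∈ P k → g = 1)
    {g₁ g₂ g₃ : G} {i j k : I} {c₁ : G ⧸ P i} {c₂ : G ⧸ P j} {c₃ : G ⧸ P k}
    (hg13 : g₁ ≠ g₃)
    (hc12 : (⟨i, c₁⟩ : Σ i : I, G ⧸ P i) ≠ ⟨j, c₂⟩)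
    (hc23 : (⟨j, c₂⟩ : Σ i : I, G ⧸ P i) ≠ ⟨k, c₃⟩)
    (hc13 : (⟨i, c₁⟩ : Σ i : I, G ⧸ P i) ≠ ⟨k, c₃⟩)
    (e1 : (g₁ : G ⧸ P i) = c₁) (e2 : (g₂ : G ⧸ P i) = c₁)
    (e3 : (g₂ : G ⧸ P j) = c₂) (e4 : (g₃ : G ⧸ P j) = c₂)
    (e5 : (g₃ : G ⧸ P k) = c₃) (e6 : (g₁ : G ⧸ P k) = c₃) : False := by
  rcases eq_or_ne i j with rfl | hij
  · exact hc12 (by rw [← e2, ← e3])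
  rcases eq_or_ne j k with rfl | hjk
  · exact hc23 (by rw [← e4, ← e5])
  rcases eq_or_ne i k with rfl | hik
  · exact hc13 (by rw [← e1, ← e6])
  have hi : g₁⁻¹ * g₂ ∈ P i := QuotientGroup.eq.mp (e1.trans e2.symm)
  have hj : g₂⁻¹ * g₃ ∈ P j := QuotientGroup.eq.mp (e3.trans e4.symm)
  have hk : g₃⁻¹ * g₁ ∈ P k := QuotientGroup.eq.mp (e5.trans e6.symm)
  have hmem : g₁⁻¹ * g₃ ∈ (P i : Set G) * (P j : Set G) :=
    ⟨g₁⁻¹ * g₂, hi, g₂⁻¹ * g₃, hj, by group⟩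
  have hk' : g₁⁻¹ * g₃ ∈ P k := by
    have := (P k).inv_mem hk
    simpa using this
  have := h3 i j k hij hjk hik _ hmem hk'
  rw [inv_mul_eq_one] at this
  exact hg13 this

end Aux

/-- If `Pᵢ Pⱼ ∩ P_k = {1}` for all pairwise distinct `i, j, k`, and `Pᵢ ∩ Pⱼ = {1}` for
distinct `i, j`, then the coset graph of `G` with respect to `{Pᵢ}` has girth at least 8. -/
theorem cosetGraph_girth_ge_eight {G : Type*} [Group G] {I : Type*} (P : I → Subgroup G)
    (h2 : ∀ i j : I, i ≠ j → P i ⊓ P j = ⊥)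
    (h3 : ∀ i j k : I, i ≠ j → j ≠ k → i ≠ k →
      ∀ g : G, g ∈ (P i : Set G) * (P j : Set G) → g ∈ P k → g = 1) :
    8 ≤ (cosetGraph P).egirth := by
  rw [SimpleGraph.le_egirth]
  intro a w hw
  by_contra hlt
  push_neg at hlt
  -- length is even
  have heven : (w.length : ZMod 2) = 0 := by
    rw [cosetGraph_walk_parity w]; ring
  have hdvd : 2 ∣ w.length := (ZMod.natCast_eq_zero_iff _ 2).mp heven
  have h3le : 3 ≤ w.length := hw.three_le_length
  have hlen : w.length = 4 ∨ w.length = 6 := by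
    have hlt' : w.length < 8 := by exact_mod_cast hlt
    omega
  -- destructure the walk
  have hnd := hw.2
  clear heven hdvd hlt h3le hw
  rcases hlen with hlen | hlen
  · -- length 4
    cases w with
    | nil => simp at hlen
    | cons h1 w =>
    cases w with
    | nil => simp at hlen
    | cons h2' w =>
    cases w with
    | nil => simp at hlen
    | cons h3' w =>
    cases w with
    | nil => simp at hlen
    | cons h4 w =>
    cases w with
    | cons h5 w => simp at hlen
    | nil =>
    simp only [SimpleGraph.Walk.support_cons, SimpleGraph.Walk.support_nil,
      List.tail_cons] at hnd
    -- a - b - c - d - a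
    cases a with
    | inl g₁ =>
      obtain ⟨i, rfl⟩ := adj_inl h1
      obtain ⟨g₂, rfl, e2⟩ := adj_inr h2'
      obtain ⟨j, rfl⟩ := adj_inl h3'
      obtain ⟨g₁', he, e4⟩ := adj_inr h4
      obtain rfl : g₁ = g₁' := Sum.inl.inj he
      refine key4 (P := P) h2 (g₁ := g₁) (g₂ := g₂) ?_ ?_ rfl e2 e4 rfl
      · intro h; subst h; simp at hnd
      · intro h; rw [congrArg (Sum.inr (α := G)) h] at hnd; simp at hnd
    | inr s =>
      obtain ⟨g₁, rfl, e1⟩ := adj_inr h1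
      obtain ⟨i, rfl⟩ := adj_inl h2'
      obtain ⟨g₂, rfl, e3⟩ := adj_inr h3'
      obtain ⟨j, he⟩ := adj_inl h4
      obtain rfl : s = ⟨j, (g₂ : G ⧸ P j)⟩ := Sum.inr.inj he
      refine key4 (P := P) h2 (g₁ := g₁) (g₂ := g₂) ?_ ?_ rfl e3 e1 rfl
      · intro h; subst h; simp at hnd
      · intro h; rw [congrArg (Sum.inr (α := G)) h] at hnd; simp at hnd
  · -- length 6
    cases w with
    | nil => simp at hlen
    | cons h1 w =>
    cases w with
    | nil => simp at hlen
    | cons h2' w =>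
    cases w with
    | nil => simp at hlen
    | cons h3' w =>
    cases w with
    | nil => simp at hlen
    | cons h4 w =>
    cases w with
    | nil => simp at hlen
    | cons h5 w =>
    cases w with
    | nil => simp at hlen
    | cons h6 w =>
    cases w with
    | cons h7 w => simp at hlen
    | nil =>
    simp only [SimpleGraph.Walk.support_cons, SimpleGraph.Walk.support_nil,
      List.tail_cons] at hnd
    -- a - b - c - d - e - f - a
    cases a with
    | inl g₁ =>
      obtain ⟨i, rfl⟩ := adj_inl h1
      obtain ⟨g₂, rfl, e2⟩ := adj_inr h2'
      obtain ⟨j, rfl⟩ := adj_inl h3'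
      obtain ⟨g₃, rfl, e4⟩ := adj_inr h4
      obtain ⟨k, rfl⟩ := adj_inl h5
      obtain ⟨g₁', he, e6⟩ := adj_inr h6
      obtain rfl : g₁ = g₁' := Sum.inl.inj he
      refine key6 (P := P) h2 h3 (g₁ := g₁) (g₂ := g₂) (g₃ := g₃)
        ?_ ?_ ?_ ?_ rfl e2 rfl e4 rfl e6
      · intro h; subst h; simp at hnd
      · intro h; rw [congrArg (Sum.inr (α := G)) h] at hnd; simp at hnd
      · intro h; rw [congrArg (Sum.inr (α := G)) h] at hnd; simp at hnd
      · intro h; rw [congrArg (Sum.inr (α := G)) h] at hnd; simp at hnd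
    | inr s =>
      obtain ⟨g₁, rfl, e1⟩ := adj_inr h1
      obtain ⟨i, rfl⟩ := adj_inl h2'
      obtain ⟨g₂, rfl, e3⟩ := adj_inr h3'
      obtain ⟨j, rfl⟩ := adj_inl h4
      obtain ⟨g₃, rfl, e5⟩ := adj_inr h5
      obtain ⟨k, he⟩ := adj_inl h6
      obtain rfl : s = ⟨k, (g₃ : G ⧸ P k)⟩ := Sum.inr.inj he
      refine key6 (P := P) h2 h3 (g₁ := g₁) (g₂ := g₂) (g₃ := g₃)
        ?_ ?_ ?_ ?_ rfl e3 rfl e5 rfl e1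
      · intro h; subst h; simp at hnd
      · intro h; rw [congrArg (Sum.inr (α := G)) h] at hnd; simp at hnd
      · intro h; rw [congrArg (Sum.inr (α := G)) h] at hnd; simp at hnd
      · intro h; rw [congrArg (Sum.inr (α := G)) h] at hnd; simp at hnd
end

section
/- Let p be an odd prime and H = H(F_p) the Heisenberg group over F_p with generators x, y and z = [x,y]. Let P₁ = ⟨x⟩, P₂ = ⟨z⟩, and Q_a = ⟨x^a y z^{-a/2}⟩ for a ∈ F_p. Then for any three pairwise distinct subgroups P, P', P'' from this collection of p+2 subgroups, one has PP' ∩ P'' = {1}. -/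
/-- The Heisenberg group over `ℤ/pℤ` (upper unitriangular 3×3 matrices over `𝔽_p`),
recorded by the three strictly-upper-triangular entries. -/
@[ext]
structure Heisenberg (p : ℕ) where
  a : ZMod p
  b : ZMod p
  c : ZMod p

namespace Heisenberg

variable {p : ℕ}

instance : Mul (Heisenberg p) :=
  ⟨fun g h => ⟨g.a + h.a, g.b + h.b, g.c + h.c + g.a * h.b⟩⟩

instance : One (Heisenberg p) := ⟨⟨0, 0, 0⟩⟩

instance : Inv (Heisenberg p) :=
  ⟨fun g => ⟨-g.a, -g.b, g.a * g.b - g.c⟩⟩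

@[simp] lemma mul_a (g h : Heisenberg p) : (g * h).a = g.a + h.a := rfl
@[simp] lemma mul_b (g h : Heisenberg p) : (g * h).b = g.b + h.b := rfl
@[simp] lemma mul_c (g h : Heisenberg p) : (g * h).c = g.c + h.c + g.a * h.b := rfl
@[simp] lemma one_a : (1 : Heisenberg p).a = 0 := rfl
@[simp] lemma one_b : (1 : Heisenberg p).b = 0 := rfl
@[simp] lemma one_c : (1 : Heisenberg p).c = 0 := rfl
@[simp] lemma inv_a (g : Heisenberg p) : g⁻¹.a = -g.a := rfl
@[simp] lemma inv_b (g : Heisenberg p) : g⁻¹.b = -g.b := rfl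
@[simp] lemma inv_c (g : Heisenberg p) : g⁻¹.c = g.a * g.b - g.c := rfl

instance : Group (Heisenberg p) where
  mul_assoc g h k := by ext <;> simp <;> ring
  one_mul g := by ext <;> simp
  mul_one g := by ext <;> simp
  inv_mul_cancel g := by ext <;> simp

/-- The generator `x` (the elementary matrix `E₁₂(1)`). -/
def x : Heisenberg p := ⟨1, 0, 0⟩

/-- The generator `y` (the elementary matrix `E₂₃(1)`). -/
def y : Heisenberg p := ⟨0, 1, 0⟩

/-- The central element `z = [x, y]` (the elementary matrix `E₁₃(1)`). -/
def z : Heisenberg p := ⟨0, 0, 1⟩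

open scoped commutatorElement in
lemma z_eq_commutator : (z : Heisenberg p) = ⁅(x : Heisenberg p), y⁆ := by
  ext <;> simp [x, y, z, commutatorElement_def]

/-- The element `x^a · y · z^{-a/2}`, for `a ∈ 𝔽_p` (powers with exponents in `𝔽_p`
are computed via natural representatives, which is legitimate since `x` and `z`
have order dividing `p`). -/
def w (a : ZMod p) : Heisenberg p :=
  x ^ a.val * y * z ^ (-(a * (2 : ZMod p)⁻¹)).val

/-- The collection of `p + 2` cyclic subgroups `⟨x⟩`, `⟨z⟩`, and
`⟨x^a y z^{-a/2}⟩` for `a ∈ 𝔽_p`, indexed by `Fin 2 ⊕ ZMod p`. -/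
def P (p : ℕ) : Fin 2 ⊕ ZMod p → Subgroup (Heisenberg p)
  | Sum.inl 0 => Subgroup.zpowers x
  | Sum.inl 1 => Subgroup.zpowers z
  | Sum.inr a => Subgroup.zpowers (w a)

end Heisenberg

open Heisenberg

namespace HeisenbergAux

variable {p : ℕ}

lemma x_pow (n : ℕ) : (x : Heisenberg p) ^ n = ⟨(n : ZMod p), 0, 0⟩ := by
  induction n with
  | zero => ext <;> simp [x]
  | succ n ih => rw [pow_succ, ih]; ext <;> simp [x] <;> push_cast <;> ring

lemma z_pow (n : ℕ) : (z : Heisenberg p) ^ n = ⟨0, 0, (n : ZMod p)⟩ := by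
  induction n with
  | zero => ext <;> simp [z]
  | succ n ih => rw [pow_succ, ih]; ext <;> simp [z] <;> push_cast <;> ring

lemma finite_heis [NeZero p] : Finite (Heisenberg p) := by
  apply Finite.of_injective (fun g : Heisenberg p => (g.a, g.b, g.c))
  intro g h hgh
  ext <;> simp_all

lemma w_eq [NeZero p] (a : ZMod p) (h2 : (2 : ZMod p) * 2⁻¹ = 1) :
    (w a : Heisenberg p) = ⟨a, 1, a * 2⁻¹⟩ := by
  have hv : ∀ b : ZMod p, ((b.val : ℕ) : ZMod p) = b := fun b => by
    simp [ZMod.natCast_val, ZMod.cast_id]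
  ext <;> simp [w, x_pow, z_pow, y, hv]
  linear_combination (-a) * h2

lemma w_pow [NeZero p] (a : ZMod p) (h2 : (2 : ZMod p) * 2⁻¹ = 1) (n : ℕ) :
    (w a : Heisenberg p) ^ n = ⟨(n : ZMod p) * a, (n : ZMod p), a * (n : ZMod p) ^ 2 * 2⁻¹⟩ := by
  induction n with
  | zero => ext <;> simp
  | succ n ih =>
    rw [pow_succ, ih, w_eq a h2]
    ext
    · simp only [Heisenberg.mul_a]; push_cast; ring
    · simp only [Heisenberg.mul_b]; push_cast; ring
    · simp only [Heisenberg.mul_c]; push_cast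
      linear_combination (-(a * (n : ZMod p))) * h2

lemma mem_X_iff [NeZero p] (g : Heisenberg p) :
    g ∈ Subgroup.zpowers (x : Heisenberg p) ↔ g.b = 0 ∧ g.c = 0 := by
  have : Finite (Heisenberg p) := finite_heis
  rw [← mem_powers_iff_mem_zpowers, Submonoid.mem_powers_iff]
  constructor
  · rintro ⟨n, rfl⟩
    simp [x_pow]
  · rintro ⟨hb, hc⟩
    exact ⟨g.a.val, by rw [x_pow]; ext <;> simp [ZMod.natCast_val, ZMod.cast_id, hb, hc]⟩

lemma mem_Z_iff [NeZero p] (g : Heisenberg p) :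
    g ∈ Subgroup.zpowers (z : Heisenberg p) ↔ g.a = 0 ∧ g.b = 0 := by
  have : Finite (Heisenberg p) := finite_heis
  rw [← mem_powers_iff_mem_zpowers, Submonoid.mem_powers_iff]
  constructor
  · rintro ⟨n, rfl⟩
    simp [z_pow]
  · rintro ⟨ha, hb⟩
    exact ⟨g.c.val, by rw [z_pow]; ext <;> simp [ZMod.natCast_val, ZMod.cast_id, ha, hb]⟩

lemma mem_w_iff [Fact p.Prime] (a : ZMod p) (h2 : (2 : ZMod p) * 2⁻¹ = 1)
    (h2' : (2 : ZMod p) ≠ 0) (g : Heisenberg p) :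
    g ∈ Subgroup.zpowers (w a : Heisenberg p) ↔ g.a = g.b * a ∧ 2 * g.c = a * g.b ^ 2 := by
  have : Finite (Heisenberg p) := finite_heis
  rw [← mem_powers_iff_mem_zpowers, Submonoid.mem_powers_iff]
  constructor
  · rintro ⟨n, rfl⟩
    rw [w_pow a h2]
    refine ⟨rfl, ?_⟩
    simp only
    linear_combination a * (n : ZMod p) ^ 2 * h2
  · rintro ⟨ha, hc⟩
    refine ⟨g.b.val, ?_⟩
    rw [w_pow a h2]
    have hv : ((g.b.val : ℕ) : ZMod p) = g.b := by simp [ZMod.natCast_val, ZMod.cast_id]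
    ext
    · simp [hv]; rw [ha]
    · simp [hv]
    · simp [hv]
      apply mul_left_cancel₀ h2'
      rw [hc]
      linear_combination a * g.b ^ 2 * h2

lemma P_inl0 : P p (Sum.inl 0) = Subgroup.zpowers (x : Heisenberg p) := rfl
lemma P_inl1 : P p (Sum.inl 1) = Subgroup.zpowers (z : Heisenberg p) := rfl
lemma P_inr (a : ZMod p) : P p (Sum.inr a) = Subgroup.zpowers (w a : Heisenberg p) := rfl

lemma P_cases (i : Fin 2 ⊕ ZMod p) :
    i = Sum.inl 0 ∨ i = Sum.inl 1 ∨ ∃ a, i = Sum.inr a := by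
  rcases i with i | a
  · fin_cases i
    · exact Or.inl rfl
    · exact Or.inr (Or.inl rfl)
  · exact Or.inr (Or.inr ⟨a, rfl⟩)

end HeisenbergAux

open scoped Pointwise in
/-- For `p` an odd prime and any three pairwise distinct subgroups `P, P', P''` among the
`p + 2` subgroups `⟨x⟩`, `⟨z⟩`, `⟨x^a y z^{-a/2}⟩` (`a ∈ 𝔽_p`) of the Heisenberg group,
one has `P P' ∩ P'' = {1}`. -/
theorem heisenberg_product_condition (p : ℕ) (hp : p.Prime) (hodd : Odd p) :
    ∀ i j k : Fin 2 ⊕ ZMod p, i ≠ j → j ≠ k → i ≠ k →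
      ∀ g : Heisenberg p, g ∈ (P p i : Set (Heisenberg p)) * (P p j : Set (Heisenberg p)) →
        g ∈ P p k → g = 1 := by
  haveI : Fact p.Prime := ⟨hp⟩
  haveI : NeZero p := ⟨hp.pos.ne'⟩
  have hpne2 : p ≠ 2 := by
    rintro rfl
    exact (by decide : ¬ Odd 2) hodd
  have h2' : (2 : ZMod p) ≠ 0 := by
    intro h
    have h2d : p ∣ 2 := by
      have := (ZMod.natCast_eq_zero_iff 2 p).mp (by exact_mod_cast h)
      exact this
    have := Nat.le_of_dvd (by norm_num) h2d
    have := hp.two_le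
    omega
  have h2 : (2 : ZMod p) * 2⁻¹ = 1 := mul_inv_cancel₀ h2'
  have half : ∀ t : ZMod p, 2 * t = 0 → t = 0 := fun t ht =>
    (mul_eq_zero.mp ht).resolve_left h2'
  -- swap lemma
  have swap : ∀ i j k : Fin 2 ⊕ ZMod p,
      (∀ g : Heisenberg p, g ∈ (P p i : Set (Heisenberg p)) * (P p j : Set (Heisenberg p)) →
        g ∈ P p k → g = 1) →
      ∀ g : Heisenberg p, g ∈ (P p j : Set (Heisenberg p)) * (P p i : Set (Heisenberg p)) →
        g ∈ P p k → g = 1 := by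
    intro i j k h g hg hk
    obtain ⟨u, hu, v, hv, rfl⟩ := hg
    have h1 : (u * v)⁻¹ = 1 := by
      refine h _ ⟨v⁻¹, ?_, u⁻¹, ?_, by rw [mul_inv_rev]⟩ ?_
      · exact inv_mem hv
      · exact inv_mem hu
      · exact inv_mem hk
    rwa [inv_eq_one] at h1
  -- the eight core cases
  have hXZ_Q : ∀ (c : ZMod p) (g : Heisenberg p),
      g ∈ (Subgroup.zpowers (x : Heisenberg p) : Set (Heisenberg p)) *
          (Subgroup.zpowers (z : Heisenberg p) : Set (Heisenberg p)) →
      g ∈ Subgroup.zpowers (w c) → g = 1 := by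
    intro c g hg hk
    obtain ⟨u, hu, v, hv, rfl⟩ := hg
    obtain ⟨hub, huc⟩ := (HeisenbergAux.mem_X_iff u).mp hu
    obtain ⟨hva, hvb⟩ := (HeisenbergAux.mem_Z_iff v).mp hv
    obtain ⟨hk1, hk2⟩ := (HeisenbergAux.mem_w_iff c h2 h2' _).mp hk
    simp only [mul_a, mul_b, mul_c, hub, huc, hva, hvb, add_zero, zero_add,
      mul_zero, zero_mul] at hk1 hk2
    have hvc : v.c = 0 := half _ (by linear_combination hk2)
    ext <;> simp [hub, huc, hva, hvb, hvc, hk1]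
  have hXQ_Z : ∀ (a : ZMod p) (g : Heisenberg p),
      g ∈ (Subgroup.zpowers (x : Heisenberg p) : Set (Heisenberg p)) *
          (Subgroup.zpowers (w a) : Set (Heisenberg p)) →
      g ∈ Subgroup.zpowers (z : Heisenberg p) → g = 1 := by
    intro a g hg hk
    obtain ⟨u, hu, v, hv, rfl⟩ := hg
    obtain ⟨hub, huc⟩ := (HeisenbergAux.mem_X_iff u).mp hu
    obtain ⟨hv1, hv2⟩ := (HeisenbergAux.mem_w_iff a h2 h2' _).mp hv
    obtain ⟨hk1, hk2⟩ := (HeisenbergAux.mem_Z_iff _).mp hk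
    simp only [mul_a, mul_b, mul_c, hub, zero_add] at hk1 hk2
    -- hk2 : v.b = 0
    have hvb : v.b = 0 := hk2
    have hva : v.a = 0 := by rw [hv1, hvb, zero_mul]
    have hua : u.a = 0 := by rw [hva, add_zero] at hk1; exact hk1
    have hvc : v.c = 0 := half _ (by rw [hv2, hvb]; ring)
    ext <;> simp [hub, huc, hva, hvb, hvc, hua]
  have hXQ_Q : ∀ (a b : ZMod p), a ≠ b → ∀ g : Heisenberg p,
      g ∈ (Subgroup.zpowers (x : Heisenberg p) : Set (Heisenberg p)) *
          (Subgroup.zpowers (w a) : Set (Heisenberg p)) →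
      g ∈ Subgroup.zpowers (w b) → g = 1 := by
    intro a b hab g hg hk
    obtain ⟨u, hu, v, hv, rfl⟩ := hg
    obtain ⟨hub, huc⟩ := (HeisenbergAux.mem_X_iff u).mp hu
    obtain ⟨hv1, hv2⟩ := (HeisenbergAux.mem_w_iff a h2 h2' _).mp hv
    obtain ⟨hk1, hk2⟩ := (HeisenbergAux.mem_w_iff b h2 h2' _).mp hk
    simp only [mul_a, mul_b, mul_c, hub, huc, zero_add, add_zero] at hk1 hk2
    -- hk1 : u.a + v.a = v.b * b ; hk2 : 2 * (v.c + u.a * v.b) = b * v.b ^ 2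
    have key : v.b ^ 2 * (b - a) = 0 := by
      linear_combination hk2 - hv2 - 2 * v.b * hk1 + 2 * v.b * hv1
    have hvb : v.b = 0 := by
      rcases mul_eq_zero.mp key with h | h
      · exact pow_eq_zero_iff (n := 2) (by norm_num) |>.mp h
      · exact absurd (by linear_combination h) hab.symm
    have hva : v.a = 0 := by rw [hv1, hvb, zero_mul]
    have hua : u.a = 0 := by
      rw [hva, add_zero, hvb, zero_mul] at hk1; exact hk1
    have hvc : v.c = 0 := half _ (by rw [hv2, hvb]; ring)
    ext <;> simp [hub, huc, hva, hvb, hvc, hua]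
  have hZQ_X : ∀ (a : ZMod p) (g : Heisenberg p),
      g ∈ (Subgroup.zpowers (z : Heisenberg p) : Set (Heisenberg p)) *
          (Subgroup.zpowers (w a) : Set (Heisenberg p)) →
      g ∈ Subgroup.zpowers (x : Heisenberg p) → g = 1 := by
    intro a g hg hk
    obtain ⟨u, hu, v, hv, rfl⟩ := hg
    obtain ⟨hua, hub⟩ := (HeisenbergAux.mem_Z_iff u).mp hu
    obtain ⟨hv1, hv2⟩ := (HeisenbergAux.mem_w_iff a h2 h2' _).mp hv
    obtain ⟨hk1, hk2⟩ := (HeisenbergAux.mem_X_iff _).mp hk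
    simp only [mul_a, mul_b, mul_c, hua, hub, zero_add, zero_mul, add_zero] at hk1 hk2
    -- hk1 : v.b = 0 ; hk2 : u.c + v.c = 0 (roughly)
    have hvb : v.b = 0 := hk1
    have hva : v.a = 0 := by rw [hv1, hvb, zero_mul]
    have hvc : v.c = 0 := half _ (by rw [hv2, hvb]; ring)
    have huc : u.c = 0 := by linear_combination hk2 - hvc
    ext <;> simp [hua, hub, huc, hva, hvb, hvc]
  have hZQ_Q : ∀ (a b : ZMod p), a ≠ b → ∀ g : Heisenberg p,
      g ∈ (Subgroup.zpowers (z : Heisenberg p) : Set (Heisenberg p)) *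
          (Subgroup.zpowers (w a) : Set (Heisenberg p)) →
      g ∈ Subgroup.zpowers (w b) → g = 1 := by
    intro a b hab g hg hk
    obtain ⟨u, hu, v, hv, rfl⟩ := hg
    obtain ⟨hua, hub⟩ := (HeisenbergAux.mem_Z_iff u).mp hu
    obtain ⟨hv1, hv2⟩ := (HeisenbergAux.mem_w_iff a h2 h2' _).mp hv
    obtain ⟨hk1, hk2⟩ := (HeisenbergAux.mem_w_iff b h2 h2' _).mp hk
    simp only [mul_a, mul_b, mul_c, hua, hub, zero_add, zero_mul, add_zero] at hk1 hk2
    -- hk1 : v.a = v.b * b ; hk2 : 2 * (u.c + v.c) = b * v.b ^ 2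
    have key : v.b * (a - b) = 0 := by linear_combination hk1 - hv1
    have hvb : v.b = 0 := by
      rcases mul_eq_zero.mp key with h | h
      · exact h
      · exact absurd (by linear_combination h) hab
    have hva : v.a = 0 := by rw [hv1, hvb, zero_mul]
    have hvc : v.c = 0 := half _ (by rw [hv2, hvb]; ring)
    have huc : u.c = 0 := half _ (by linear_combination hk2 - 2 * hvc + b * v.b * hvb)
    ext <;> simp [hua, hub, huc, hva, hvb, hvc]
  have hQQ_X : ∀ (a b : ZMod p), a ≠ b → ∀ g : Heisenberg p,
      g ∈ (Subgroup.zpowers (w a) : Set (Heisenberg p)) *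
          (Subgroup.zpowers (w b) : Set (Heisenberg p)) →
      g ∈ Subgroup.zpowers (x : Heisenberg p) → g = 1 := by
    intro a b hab g hg hk
    obtain ⟨u, hu, v, hv, rfl⟩ := hg
    obtain ⟨hu1, hu2⟩ := (HeisenbergAux.mem_w_iff a h2 h2' _).mp hu
    obtain ⟨hv1, hv2⟩ := (HeisenbergAux.mem_w_iff b h2 h2' _).mp hv
    obtain ⟨hk1, hk2⟩ := (HeisenbergAux.mem_X_iff _).mp hk
    simp only [mul_a, mul_b, mul_c] at hk1 hk2
    -- hk1 : u.b + v.b = 0 ; hk2 : u.c + v.c + u.a * v.b = 0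
    have key : u.b ^ 2 * (b - a) = 0 := by
      linear_combination 2 * hk2 - hu2 - hv2 - 2 * v.b * hu1 -
        (b * v.b - b * u.b + 2 * a * u.b) * hk1
    have hub : u.b = 0 := by
      rcases mul_eq_zero.mp key with h | h
      · exact pow_eq_zero_iff (n := 2) (by norm_num) |>.mp h
      · exact absurd (by linear_combination h) hab.symm
    have hvb : v.b = 0 := by linear_combination hk1 - hub
    have hua : u.a = 0 := by rw [hu1, hub, zero_mul]
    have hva : v.a = 0 := by rw [hv1, hvb, zero_mul]
    have huc : u.c = 0 := half _ (by rw [hu2, hub]; ring)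
    have hvc : v.c = 0 := half _ (by rw [hv2, hvb]; ring)
    ext <;> simp [hua, hub, huc, hva, hvb, hvc]
  have hQQ_Z : ∀ (a b : ZMod p), a ≠ b → ∀ g : Heisenberg p,
      g ∈ (Subgroup.zpowers (w a) : Set (Heisenberg p)) *
          (Subgroup.zpowers (w b) : Set (Heisenberg p)) →
      g ∈ Subgroup.zpowers (z : Heisenberg p) → g = 1 := by
    intro a b hab g hg hk
    obtain ⟨u, hu, v, hv, rfl⟩ := hg
    obtain ⟨hu1, hu2⟩ := (HeisenbergAux.mem_w_iff a h2 h2' _).mp hu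
    obtain ⟨hv1, hv2⟩ := (HeisenbergAux.mem_w_iff b h2 h2' _).mp hv
    obtain ⟨hk1, hk2⟩ := (HeisenbergAux.mem_Z_iff _).mp hk
    simp only [mul_a, mul_b, mul_c] at hk1 hk2
    -- hk1 : u.a + v.a = 0 ; hk2 : u.b + v.b = 0
    have key : u.b * (a - b) = 0 := by
      linear_combination hk1 - hu1 - hv1 - b * hk2
    have hub : u.b = 0 := by
      rcases mul_eq_zero.mp key with h | h
      · exact h
      · exact absurd (by linear_combination h) hab
    have hvb : v.b = 0 := by linear_combination hk2 - hub
    have hua : u.a = 0 := by rw [hu1, hub, zero_mul]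
    have hva : v.a = 0 := by rw [hv1, hvb, zero_mul]
    have huc : u.c = 0 := half _ (by rw [hu2, hub]; ring)
    have hvc : v.c = 0 := half _ (by rw [hv2, hvb]; ring)
    ext <;> simp [hua, hub, huc, hva, hvb, hvc]
  have hQQ_Q : ∀ (a b c : ZMod p), a ≠ b → a ≠ c → b ≠ c → ∀ g : Heisenberg p,
      g ∈ (Subgroup.zpowers (w a) : Set (Heisenberg p)) *
          (Subgroup.zpowers (w b) : Set (Heisenberg p)) →
      g ∈ Subgroup.zpowers (w c) → g = 1 := by
    intro a b c hab hac hbc g hg hk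
    obtain ⟨u, hu, v, hv, rfl⟩ := hg
    obtain ⟨hu1, hu2⟩ := (HeisenbergAux.mem_w_iff a h2 h2' _).mp hu
    obtain ⟨hv1, hv2⟩ := (HeisenbergAux.mem_w_iff b h2 h2' _).mp hv
    obtain ⟨hk1, hk2⟩ := (HeisenbergAux.mem_w_iff c h2 h2' _).mp hk
    simp only [mul_a, mul_b, mul_c] at hk1 hk2
    -- hk1 : u.a + v.a = (u.b + v.b) * c
    -- hk2 : 2 * (u.c + v.c + u.a * v.b) = c * (u.b + v.b) ^ 2
    have key : u.b * v.b * (a - b) = 0 := by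
      linear_combination hk2 - hu2 - hv2 - 2 * v.b * hu1 +
        (u.b + v.b) * (hu1 + hv1 - hk1)
    have hzero : u.b = 0 ∧ v.b = 0 := by
      rcases mul_eq_zero.mp key with h | h
      · rcases mul_eq_zero.mp h with h' | h'
        · -- u.b = 0 : then hk1 gives v.b * b = v.b * c
          refine ⟨h', ?_⟩
          have h3 : v.b * (b - c) = 0 := by
            linear_combination hk1 - hu1 - hv1 + (c - a) * h'
          rcases mul_eq_zero.mp h3 with h4 | h4
          · exact h4
          · exact absurd (by linear_combination h4) hbc
        · -- v.b = 0
          refine ⟨?_, h'⟩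
          have h3 : u.b * (a - c) = 0 := by
            linear_combination hk1 - hu1 - hv1 + (c - b) * h'
          rcases mul_eq_zero.mp h3 with h4 | h4
          · exact h4
          · exact absurd (by linear_combination h4) hac
      · exact absurd (by linear_combination h) hab
    obtain ⟨hub, hvb⟩ := hzero
    have hua : u.a = 0 := by rw [hu1, hub, zero_mul]
    have hva : v.a = 0 := by rw [hv1, hvb, zero_mul]
    have huc : u.c = 0 := half _ (by rw [hu2, hub]; ring)
    have hvc : v.c = 0 := half _ (by rw [hv2, hvb]; ring)
    ext <;> simp [hua, hub, huc, hva, hvb, hvc]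
  -- dispatch
  intro i j k hij hjk hik g hg hk
  have a : Unit := ()
  have b : Unit := ()
  have c : Unit := ()
  rcases HeisenbergAux.P_cases i with rfl | rfl | ⟨a, rfl⟩ <;>
  rcases HeisenbergAux.P_cases j with rfl | rfl | ⟨b, rfl⟩ <;>
  rcases HeisenbergAux.P_cases k with rfl | rfl | ⟨c, rfl⟩ <;>
    simp only [HeisenbergAux.P_inl0, HeisenbergAux.P_inl1, HeisenbergAux.P_inr] at hg hk <;>
    first
      | exact absurd rfl hij
      | exact absurd rfl hjk
      | exact absurd rfl hik
      | (exact hXZ_Q c g hg hk)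
      | (exact swap (Sum.inl 0) (Sum.inl 1) (Sum.inr c) (hXZ_Q c) g hg hk)
      | (exact hXQ_Z b g hg hk)
      | (exact swap (Sum.inl 0) (Sum.inr a) (Sum.inl 1) (hXQ_Z a) g hg hk)
      | (exact hXQ_Q b c (fun h => hjk (by rw [h])) g hg hk)
      | (exact swap (Sum.inl 0) (Sum.inr a) (Sum.inr c) (hXQ_Q a c (fun h => hik (by rw [h]))) g hg hk)
      | (exact hZQ_X b g hg hk)
      | (exact swap (Sum.inl 1) (Sum.inr a) (Sum.inl 0) (hZQ_X a) g hg hk)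
      | (exact hZQ_Q b c (fun h => hjk (by rw [h])) g hg hk)
      | (exact swap (Sum.inl 1) (Sum.inr a) (Sum.inr c) (hZQ_Q a c (fun h => hik (by rw [h]))) g hg hk)
      | (exact hQQ_X a b (fun h => hij (by rw [h])) g hg hk)
      | (exact hQQ_Z a b (fun h => hij (by rw [h])) g hg hk)
      | (exact hQQ_Q a b c (fun h => hij (by rw [h])) (fun h => hik (by rw [h])) (fun h => hjk (by rw [h])) g hg hk)
end

section
/- For all real p ≥ 6, setting λ_P = 1 - √(p+1)/(p+2) and λ_Q = 1 - √(2/(p+2)), one has (λ_P + λ_Q - 1)² + 2(λ_P + λ_Q - 1)(2λ_Q - 1) > 0. -/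
/-- For all real `p ≥ 6`, with `λ_P = 1 - √(p+1)/(p+2)` and `λ_Q = 1 - √(2/(p+2))`,
one has `(λ_P + λ_Q - 1)² + 2(λ_P + λ_Q - 1)(2 λ_Q - 1) > 0`. -/
theorem second_spectral_condition (p : ℝ) (hp : 6 ≤ p) :
    ((1 - Real.sqrt (p + 1) / (p + 2)) + (1 - Real.sqrt (2 / (p + 2))) - 1) ^ 2 +
      2 * ((1 - Real.sqrt (p + 1) / (p + 2)) + (1 - Real.sqrt (2 / (p + 2))) - 1) *
        (2 * (1 - Real.sqrt (2 / (p + 2))) - 1) > 0 := by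
  have hp2 : (0:ℝ) < p + 2 := by linarith
  set s := Real.sqrt (p + 1) with hs
  set t := Real.sqrt (2 / (p + 2)) with ht
  have hs0 : 0 ≤ s := Real.sqrt_nonneg _
  have ht0 : 0 ≤ t := Real.sqrt_nonneg _
  have hs2 : s ^ 2 = p + 1 := Real.sq_sqrt (by linarith)
  have ht2 : t ^ 2 = 2 / (p + 2) := Real.sq_sqrt (by positivity)
  -- b ≤ 1/2
  have ht2' : t ^ 2 * (p + 2) = 2 := by
    rw [ht2]; field_simp
  have hb : t ≤ 1 / 2 := by
    nlinarith [ht2', ht0]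
  -- a < 1/2 : sqrt(p+1) < (p+2)/2
  have ha : s < (p + 2) / 2 := by
    nlinarith [hs2]
  have ha' : s / (p + 2) < 1 / 2 := by
    rw [div_lt_iff₀ hp2]
    linarith
  set X := (1 - s / (p + 2)) + (1 - t) - 1 with hX
  have hXpos : 0 < X := by
    have : s / (p + 2) + t < 1 := by linarith
    simp only [hX]; linarith
  have h2b : 0 ≤ 2 * (1 - t) - 1 := by linarith
  nlinarith [sq_nonneg X, mul_nonneg hXpos.le h2b]
end

section
/- A finite connected bipartite graph that is vertex-degree at least 2, has diameter 3 and girth 6 satisfies: the two parts of the bipartition, viewed as points and lines with incidence given by adjacency, form a projective plane, i.e., any two distinct points lie on a unique common line and any two distinct lines meet in a unique point. -/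
open scoped Classical

private lemma bip_walk_parity {V : Type*} {G : SimpleGraph V} {Pt L : Set V}
    (hdisj : Pt ∩ L = ∅)
    (hbip : ∀ u v : V, G.Adj u v → (u ∈ Pt ∧ v ∈ L) ∨ (u ∈ L ∧ v ∈ Pt)) :
    ∀ {u v : V} (w : G.Walk u v),
      (w.length : ZMod 2) = (if u ∈ Pt then 0 else 1) + (if v ∈ Pt then 0 else 1) := by
  intro u v w
  induction w with
  | nil =>
    have h2 : ∀ x : ZMod 2, x + x = 0 := by decide
    simp [h2]
  | @cons a b c h q ih =>
    have hab : (if a ∈ Pt then (0:ZMod 2) else 1) + (if b ∈ Pt then 0 else 1) = 1 := by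
      have := hbip a b h
      have hd : ∀ x, x ∈ Pt → x ∈ L → False := by
        intro x hx hx'
        have : x ∈ Pt ∩ L := ⟨hx, hx'⟩
        rw [hdisj] at this; exact this
      rcases this with ⟨h1, h2⟩ | ⟨h1, h2⟩
      · rw [if_pos h1, if_neg (fun hb => hd b hb h2)]; ring
      · rw [if_neg (fun ha => hd a ha h1), if_pos h2]; ring
    simp only [SimpleGraph.Walk.length_cons, Nat.cast_add, Nat.cast_one, ih]
    have : ∀ x y z : ZMod 2, x + y = 1 → (y + z) + 1 = x + z := by decide
    exact this _ _ _ hab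

private lemma unique_common {V : Type*} [Fintype V] (G : SimpleGraph V) (Pt L : Set V)
    (hdisj : Pt ∩ L = ∅)
    (hbip : ∀ u v : V, G.Adj u v → (u ∈ Pt ∧ v ∈ L) ∨ (u ∈ L ∧ v ∈ Pt))
    (hdiam : G.ediam = 3) (hgirth : G.egirth = 6) :
    ∀ p₁ p₂, p₁ ∈ Pt → p₂ ∈ Pt → p₁ ≠ p₂ →
      ∃! ℓ, ℓ ∈ L ∧ G.Adj p₁ ℓ ∧ G.Adj p₂ ℓ := by
  intro p₁ p₂ h₁ h₂ hne
  have hd : ∀ x, x ∈ Pt → x ∈ L → False := by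
    intro x hx hx'
    have : x ∈ Pt ∩ L := ⟨hx, hx'⟩
    rw [hdisj] at this; exact this
  -- distance ≤ 3
  have hle : G.edist p₁ p₂ ≤ 3 := hdiam ▸ G.edist_le_ediam
  have hne_top : G.edist p₁ p₂ ≠ ⊤ := fun h => by simp [h] at hle
  obtain ⟨w, hw⟩ := SimpleGraph.exists_walk_of_edist_ne_top hne_top
  have hwle : w.length ≤ 3 := by
    have := hw ▸ hle
    exact_mod_cast this
  have hpar : Even w.length := by
    have := bip_walk_parity hdisj hbip w
    rw [if_pos h₁, if_pos h₂] at this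
    rw [Nat.even_iff, ← Nat.dvd_iff_mod_eq_zero]
    exact (ZMod.natCast_eq_zero_iff w.length 2).mp (by simpa using this)
  have hw0 : w.length ≠ 0 := by
    intro h
    exact hne (w.eq_of_length_eq_zero h)
  have hw2 : w.length = 2 := by
    obtain ⟨k, hk⟩ := hpar; omega
  -- extract middle vertex
  obtain ⟨ℓ, hadj1, hadj2⟩ : ∃ ℓ, G.Adj p₁ ℓ ∧ G.Adj ℓ p₂ := by
    cases w with
    | nil => simp at hw2
    | cons h q =>
      cases q with
      | nil => simp at hw2
      | cons h' q' =>
        cases q' with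
        | nil => exact ⟨_, h, h'⟩
        | cons h'' q'' => simp [SimpleGraph.Walk.length_cons] at hw2
  have hℓL : ℓ ∈ L := by
    rcases hbip p₁ ℓ hadj1 with ⟨_, h⟩ | ⟨h, _⟩
    · exact h
    · exact absurd h₁ (fun hh => hd p₁ hh h)
  refine ⟨ℓ, ⟨hℓL, hadj1, hadj2.symm⟩, ?_⟩
  rintro ℓ' ⟨hℓ'L, ha1, ha2⟩
  by_contra hℓne
  -- build a 4-cycle p₁ ℓ p₂ ℓ' p₁
  have hc : G.Adj ℓ p₂ := hadj2
  have hcyc : (SimpleGraph.Walk.cons hadj1 (SimpleGraph.Walk.cons hc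
      (SimpleGraph.Walk.cons ha2 (SimpleGraph.Walk.cons ha1.symm
      SimpleGraph.Walk.nil)))).IsCycle := by
    have h1 : p₁ ≠ ℓ := fun h => hd p₁ h₁ (h ▸ hℓL)
    have h2 : p₁ ≠ ℓ' := fun h => hd p₁ h₁ (h ▸ hℓ'L)
    have h3 : p₂ ≠ ℓ := fun h => hd p₂ h₂ (h ▸ hℓL)
    have h4 : p₂ ≠ ℓ' := fun h => hd p₂ h₂ (h ▸ hℓ'L)
    rw [SimpleGraph.Walk.isCycle_def]
    refine ⟨?_, by simp, ?_⟩
    · simp [SimpleGraph.Walk.edges, Sym2.eq, Sym2.rel_iff']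
      push_neg
      constructor <;> [skip; constructor] <;> constructor <;> first | tauto | (constructor <;> tauto)
    · simp [SimpleGraph.Walk.support]
      push_neg
      constructor <;> [skip; constructor] <;> first | tauto | (constructor <;> tauto)
  have := SimpleGraph.le_egirth.mp hgirth.ge _ _ hcyc
  simp only [SimpleGraph.Walk.length_cons, SimpleGraph.Walk.length_nil] at this
  exact absurd this (by decide)


/-- A finite connected bipartite graph with parts `Pt` (points) and `L` (lines), all
vertex degrees at least 2, diameter 3 and girth 6, is the incidence graph of a
projective plane: any two distinct points lie on a unique common line and any two
distinct lines meet in a unique point. -/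
theorem bipartite_diam_three_girth_six_projective_plane
    {V : Type*} [Fintype V] (G : SimpleGraph V) (Pt L : Set V)
    (hdisj : Pt ∩ L = ∅) (hcover : Pt ∪ L = Set.univ)
    (hbip : ∀ u v : V, G.Adj u v → (u ∈ Pt ∧ v ∈ L) ∨ (u ∈ L ∧ v ∈ Pt))
    (hconn : G.Connected)
    (hdeg : ∀ v : V, 2 ≤ Nat.card (G.neighborSet v))
    (hdiam : G.ediam = 3)
    (hgirth : G.egirth = 6) :
    (∀ p₁ p₂, p₁ ∈ Pt → p₂ ∈ Pt → p₁ ≠ p₂ →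
      ∃! ℓ, ℓ ∈ L ∧ G.Adj p₁ ℓ ∧ G.Adj p₂ ℓ) ∧
    (∀ ℓ₁ ℓ₂, ℓ₁ ∈ L → ℓ₂ ∈ L → ℓ₁ ≠ ℓ₂ →
      ∃! p, p ∈ Pt ∧ G.Adj ℓ₁ p ∧ G.Adj ℓ₂ p) := by
  constructor
  · exact unique_common G Pt L hdisj hbip hdiam hgirth
  · exact unique_common G L Pt (by rw [Set.inter_comm]; exact hdisj)
      (fun u v h => (hbip u v h).symm) hdiam hgirth
end

section
/- Let G be a finite group, {P_i : i ∈ I} subgroups with |I| = s + 1 and |P_i| = t + 1 for all i, satisfying P_iP_j ∩ P_k = {1} for pairwise distinct i, j, k and P_i ∩ P_j = {1} for distinct i, j. If |G| = (1+t)(1+st), then the coset graph of G with respect to {P_i} is a bipartite graph in which every vertex of the G-side has degree s+1 and every coset vertex has degree t+1, with girth at least 8 and diameter at most 4. -/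
open scoped Pointwise

namespace CosetGraphAux

open Sum SimpleGraph

variable {G : Type*} [Group G] {I : Type*} {P : I → Subgroup G}

lemma not_adj_inl_inl (g h : G) : ¬ (cosetGraph P).Adj (inl g) (inl h) := by
  rintro ⟨-, (⟨g', i, -, h2⟩ | ⟨g', i, -, h2⟩)⟩ <;> exact absurd h2 (by simp)

lemma not_adj_inr_inr (c d : Σ i : I, G ⧸ P i) :
    ¬ (cosetGraph P).Adj (inr c) (inr d) := by
  rintro ⟨-, (⟨g', i, h1, -⟩ | ⟨g', i, h1, -⟩)⟩ <;> exact absurd h1 (by simp)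

lemma adj_inl_inr {g : G} {i : I} {x : G ⧸ P i} :
    (cosetGraph P).Adj (inl g) (inr ⟨i, x⟩) ↔ (g : G ⧸ P i) = x := by
  constructor
  · rintro ⟨-, (⟨g', i', h1, h2⟩ | ⟨g', i', h1, h2⟩)⟩
    · obtain rfl : g = g' := by simpa using h1
      obtain ⟨rfl, h⟩ : i = i' ∧ HEq x ((g : G ⧸ P i')) := by
        have := inr.inj h2
        exact Sigma.mk.inj_iff.mp this
      exact (eq_of_heq h).symm
    · exact absurd h1 (by simp)
  · rintro rfl
    exact ⟨by simp, Or.inl ⟨g, i, rfl, rfl⟩⟩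

lemma adj_inr_inl {g : G} {i : I} {x : G ⧸ P i} :
    (cosetGraph P).Adj (inr ⟨i, x⟩) (inl g) ↔ (g : G ⧸ P i) = x := by
  rw [SimpleGraph.adj_comm]; exact adj_inl_inr

/-- Shape analysis of an edge: it goes between an `inl` and an `inr`. -/
lemma adj_cases {v w : G ⊕ (Σ i : I, G ⧸ P i)} (h : (cosetGraph P).Adj v w) :
    (∃ (g : G) (i : I) (x : G ⧸ P i), v = inl g ∧ w = inr ⟨i, x⟩ ∧ (g : G ⧸ P i) = x) ∨
    (∃ (g : G) (i : I) (x : G ⧸ P i), w = inl g ∧ v = inr ⟨i, x⟩ ∧ (g : G ⧸ P i) = x) := by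
  rcases h with ⟨-, (⟨g, i, h1, h2⟩ | ⟨g, i, h1, h2⟩)⟩
  · exact Or.inl ⟨g, i, (g : G ⧸ P i), h1, h2, rfl⟩
  · exact Or.inr ⟨g, i, (g : G ⧸ P i), h1, h2, rfl⟩

lemma helper_inl {v w : G ⊕ (Σ i : I, G ⧸ P i)} {g : G} (h : (cosetGraph P).Adj v w)
    (hv : v = inl g) : ∃ c : Σ i : I, G ⧸ P i, w = inr c ∧ (g : G ⧸ P c.1) = c.2 := by
  subst hv
  rcases adj_cases h with ⟨g', i, x, h1, h2, h3⟩ | ⟨g', i, x, h1, h2, h3⟩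
  · obtain rfl : g = g' := inl.inj h1
    exact ⟨⟨i, x⟩, h2, h3⟩
  · exact absurd h2 (by simp)

lemma helper_inr {v w : G ⊕ (Σ i : I, G ⧸ P i)} {c : Σ i : I, G ⧸ P i}
    (h : (cosetGraph P).Adj v w) (hv : v = inr c) :
    ∃ g : G, w = inl g ∧ (g : G ⧸ P c.1) = c.2 := by
  subst hv
  rcases adj_cases h with ⟨g', i, x, h1, h2, h3⟩ | ⟨g', i, x, h1, h2, h3⟩
  · exact absurd h1 (by simp)
  · obtain rfl : c = ⟨i, x⟩ := inr.inj h2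
    exact ⟨g', h1, h3⟩

/-- The side function: 0 on group elements, 1 on cosets. -/
def side (v : G ⊕ (Σ i : I, G ⧸ P i)) : ℕ := Sum.elim (fun _ => 0) (fun _ => 1) v

lemma side_adj {v w : G ⊕ (Σ i : I, G ⧸ P i)} (h : (cosetGraph P).Adj v w) :
    side v + side w = 1 := by
  rcases adj_cases h with ⟨g, i, x, h1, h2, -⟩ | ⟨g, i, x, h1, h2, -⟩ <;>
    subst h1 <;> subst h2 <;> simp [side]

lemma walk_parity {u v : G ⊕ (Σ i : I, G ⧸ P i)} (w : (cosetGraph P).Walk u v) :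
    (w.length + side u + side v) % 2 = 0 := by
  induction w with
  | nil => simp only [SimpleGraph.Walk.length_nil]; omega
  | @cons a b c h p ih =>
    have := side_adj h
    simp only [SimpleGraph.Walk.length_cons]
    omega

/-- No 4-cycles: two distinct group elements cannot lie in two distinct cosets. -/
lemma square_lemma (h2 : ∀ i j : I, i ≠ j → P i ⊓ P j = ⊥)
    {g1 g2 : G} {c1 c2 : Σ i : I, G ⧸ P i} (hg : g1 ≠ g2) (hc : c1 ≠ c2)
    (e1 : (g1 : G ⧸ P c1.1) = c1.2) (e2 : (g2 : G ⧸ P c1.1) = c1.2)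
    (e3 : (g1 : G ⧸ P c2.1) = c2.2) (e4 : (g2 : G ⧸ P c2.1) = c2.2) : False := by
  obtain ⟨i, x⟩ := c1
  obtain ⟨j, y⟩ := c2
  simp only at e1 e2 e3 e4
  rcases eq_or_ne i j with rfl | hij
  · exact hc (by rw [Sigma.mk.inj_iff]; exact ⟨rfl, heq_of_eq (e1.symm.trans e3)⟩)
  · have m1 : g1⁻¹ * g2 ∈ P i := QuotientGroup.eq.mp (e1.trans e2.symm)
    have m2 : g1⁻¹ * g2 ∈ P j := QuotientGroup.eq.mp (e3.trans e4.symm)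
    have : g1⁻¹ * g2 ∈ P i ⊓ P j := ⟨m1, m2⟩
    rw [h2 i j hij] at this
    exact hg (inv_mul_eq_one.mp (Subgroup.mem_bot.mp this))

/-- No 6-cycles. -/
lemma hex_lemma (h2 : ∀ i j : I, i ≠ j → P i ⊓ P j = ⊥)
    (h3 : ∀ i j k : I, i ≠ j → j ≠ k → i ≠ k →
      ∀ g : G, g ∈ (P i : Set G) * (P j : Set G) → g ∈ P k → g = 1)
    {g1 g2 g3 : G} {c1 c2 c3 : Σ i : I, G ⧸ P i}
    (hg13 : g1 ≠ g3) (hc12 : c1 ≠ c2) (hc23 : c2 ≠ c3) (hc13 : c1 ≠ c3)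
    (e1 : (g1 : G ⧸ P c1.1) = c1.2) (e2 : (g2 : G ⧸ P c1.1) = c1.2)
    (e3 : (g2 : G ⧸ P c2.1) = c2.2) (e4 : (g3 : G ⧸ P c2.1) = c2.2)
    (e5 : (g3 : G ⧸ P c3.1) = c3.2) (e6 : (g1 : G ⧸ P c3.1) = c3.2) : False := by
  obtain ⟨i, x⟩ := c1
  obtain ⟨j, y⟩ := c2
  obtain ⟨k, z⟩ := c3
  simp only at e1 e2 e3 e4 e5 e6
  have hij : i ≠ j := by
    rintro rfl
    exact hc12 (by rw [Sigma.mk.inj_iff]; exact ⟨rfl, heq_of_eq (e2.symm.trans e3)⟩)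
  have hjk : j ≠ k := by
    rintro rfl
    exact hc23 (by rw [Sigma.mk.inj_iff]; exact ⟨rfl, heq_of_eq (e4.symm.trans e5)⟩)
  have hik : i ≠ k := by
    rintro rfl
    exact hc13 (by rw [Sigma.mk.inj_iff]; exact ⟨rfl, heq_of_eq (e1.symm.trans e6)⟩)
  have m1 : g1⁻¹ * g2 ∈ P i := QuotientGroup.eq.mp (e1.trans e2.symm)
  have m2 : g2⁻¹ * g3 ∈ P j := QuotientGroup.eq.mp (e3.trans e4.symm)
  have m3 : g1⁻¹ * g3 ∈ P k := QuotientGroup.eq.mp (e6.trans e5.symm)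
  have mprod : g1⁻¹ * g3 ∈ (P i : Set G) * (P j : Set G) := by
    have : g1⁻¹ * g3 = (g1⁻¹ * g2) * (g2⁻¹ * g3) := by group
    rw [this]
    exact Set.mul_mem_mul m1 m2
  have := h3 i j k hij hjk hik _ mprod m3
  exact hg13 (inv_mul_eq_one.mp this)

/-- The key decomposition: every group element is a product `p * q` with
`p ∈ P i` (for any prescribed `i`) and `q` in some `P j`. -/
lemma decomp [Finite G] [Finite I] {s t : ℕ}
    (hI : Nat.card I = s + 1) (hP : ∀ i, Nat.card (P i) = t + 1)
    (h2 : ∀ i j : I, i ≠ j → P i ⊓ P j = ⊥)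
    (h3 : ∀ i j k : I, i ≠ j → j ≠ k → i ≠ k →
      ∀ g : G, g ∈ (P i : Set G) * (P j : Set G) → g ∈ P k → g = 1)
    (hG : Nat.card G = (1 + t) * (1 + s * t)) (i : I) (x : G) :
    ∃ p ∈ P i, ∃ j, ∃ q ∈ P j, x = p * q := by
  classical
  haveI := Fintype.ofFinite G
  haveI := Fintype.ofFinite I
  let J := {j : I // j ≠ i}
  let D := (P i) × Option (Σ j : J, {y : P (j : I) // y ≠ 1})
  let F : D → G := fun d => (d.1 : G) * (d.2.elim (1 : G) (fun z => ((z.2 : P (z.1 : I)) : G)))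
  have hinj : Function.Injective F := by
    rintro ⟨p, o⟩ ⟨p', o'⟩ h
    match o, o' with
    | none, none =>
      simp only [F, Option.elim, mul_one] at h
      rw [Prod.mk.injEq]
      exact ⟨Subtype.ext h, rfl⟩
    | none, some ⟨j, y⟩ =>
      exfalso
      simp only [F, Option.elim, mul_one] at h
      have hy : ((y : P (j : I)) : G) ∈ P i := by
        have he : ((y : P (j : I)) : G) = (p' : G)⁻¹ * p := by
          rw [h]; group
        rw [he]; exact mul_mem ((P i).inv_mem p'.2) p.2
      have : ((y : P (j : I)) : G) ∈ P (j : I) ⊓ P i := ⟨SetLike.coe_mem _, hy⟩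
      rw [h2 _ _ j.2] at this
      exact y.2 (Subtype.ext (Subgroup.mem_bot.mp this))
    | some ⟨j, y⟩, none =>
      exfalso
      simp only [F, Option.elim, mul_one] at h
      have hy : ((y : P (j : I)) : G) ∈ P i := by
        have he : ((y : P (j : I)) : G) = (p : G)⁻¹ * p' := by
          rw [← h]; group
        rw [he]; exact mul_mem ((P i).inv_mem p.2) p'.2
      have : ((y : P (j : I)) : G) ∈ P (j : I) ⊓ P i := ⟨SetLike.coe_mem _, hy⟩
      rw [h2 _ _ j.2] at this
      exact y.2 (Subtype.ext (Subgroup.mem_bot.mp this))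
    | some ⟨j, y⟩, some ⟨j', y'⟩ =>
      simp only [F, Option.elim] at h
      rcases eq_or_ne j j' with rfl | hjj
      · have key : (p' : G)⁻¹ * (p : G) =
            ((y' : P (j : I)) : G) * ((y : P (j : I)) : G)⁻¹ := by
          rw [inv_mul_eq_iff_eq_mul, ← mul_assoc, eq_mul_inv_iff_mul_eq]
          exact h
        have hmem : (p' : G)⁻¹ * (p : G) ∈ P i ⊓ P (j : I) := by
          refine ⟨mul_mem ((P i).inv_mem p'.2) p.2, ?_⟩
          rw [key]
          exact mul_mem (y' : P (j : I)).2 ((P (j : I)).inv_mem (y : P (j : I)).2)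
        rw [h2 _ _ (Ne.symm j.2)] at hmem
        have hpp : (p : G) = (p' : G) := (inv_mul_eq_one.mp (Subgroup.mem_bot.mp hmem)).symm
        rw [hpp] at h
        have hyy : ((y : P (j : I)) : G) = ((y' : P (j : I)) : G) := mul_left_cancel h
        obtain rfl : y = y' := Subtype.ext (Subtype.ext hyy)
        rw [Prod.mk.injEq]
        exact ⟨Subtype.ext hpp, rfl⟩
      · exfalso
        have hjj' : (j : I) ≠ (j' : I) := fun e => hjj (Subtype.ext e)
        have key : ((y' : P (j' : I)) : G) * ((y : P (j : I)) : G)⁻¹ =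
            (p' : G)⁻¹ * (p : G) := by
          rw [eq_comm, inv_mul_eq_iff_eq_mul, ← mul_assoc, eq_mul_inv_iff_mul_eq]
          exact h
        have hz1 : ((y' : P (j' : I)) : G) * ((y : P (j : I)) : G)⁻¹ ∈
            (P (j' : I) : Set G) * (P (j : I) : Set G) := by
          refine Set.mul_mem_mul ?_ ?_
          · exact (y' : P (j' : I)).2
          · exact (P (j : I)).inv_mem (y : P (j : I)).2
        have hz2 : ((y' : P (j' : I)) : G) * ((y : P (j : I)) : G)⁻¹ ∈ P i := by
          rw [key]; exact mul_mem ((P i).inv_mem p'.2) p.2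
        have hone := h3 _ _ _ (Ne.symm hjj') j.2 j'.2 _ hz1 hz2
        have hyy : ((y' : P (j' : I)) : G) = ((y : P (j : I)) : G) :=
          mul_inv_eq_one.mp hone
        have hmem : ((y : P (j : I)) : G) ∈ P (j : I) ⊓ P (j' : I) :=
          ⟨(y : P (j : I)).2, hyy ▸ (y' : P (j' : I)).2⟩
        rw [h2 _ _ hjj'] at hmem
        exact y.2 (Subtype.ext (Subgroup.mem_bot.mp hmem))
  have hJ : Nat.card J = s := by
    have h := Nat.card_congr (Equiv.optionSubtypeNe i)
    rw [Finite.card_option, hI] at h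
    exact Nat.succ_injective h
  have hfib : ∀ j : J, Nat.card {y : P (j : I) // y ≠ 1} = t := by
    intro j
    have := Nat.card_congr (Equiv.optionSubtypeNe (1 : P (j : I)))
    rw [Finite.card_option, hP] at this
    omega
  have hSig : Nat.card (Σ j : J, {y : P (j : I) // y ≠ 1}) = s * t := by
    rw [Nat.card_eq_fintype_card, Fintype.card_sigma]
    have : ∀ j : J, Fintype.card {y : P (j : I) // y ≠ 1} = t := fun j => by
      rw [← Nat.card_eq_fintype_card]; exact hfib j
    simp only [this, Finset.sum_const, Finset.card_univ, smul_eq_mul]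
    rw [← Nat.card_eq_fintype_card, hJ]
  have hcard : Nat.card D = Nat.card G := by
    rw [Nat.card_prod, Finite.card_option, hSig, hP i, hG]
    ring
  have hbij : Function.Bijective F :=
    (Nat.bijective_iff_injective_and_card F).mpr ⟨hinj, hcard⟩
  obtain ⟨⟨p, o⟩, rfl⟩ := hbij.2 x
  match o with
  | none => exact ⟨p, p.2, i, 1, one_mem _, by simp [F]⟩
  | some ⟨j, y⟩ =>
    exact ⟨p, p.2, (j : I), ((y : P (j : I)) : G), SetLike.coe_mem _, by simp [F]⟩

lemma list_len5 {α : Type*} {l : List α} (h : l.length = 5) :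
    ∃ a b c d e, l = [a, b, c, d, e] := by
  rcases l with _|⟨a,_|⟨b,_|⟨c,_|⟨d,_|⟨e,_|⟨f,r⟩⟩⟩⟩⟩⟩ <;> simp_all

lemma list_len7 {α : Type*} {l : List α} (h : l.length = 7) :
    ∃ a b c d e f g, l = [a, b, c, d, e, f, g] := by
  rcases l with _|⟨a,_|⟨b,_|⟨c,_|⟨d,_|⟨e,_|⟨f,_|⟨g,_|⟨x,r⟩⟩⟩⟩⟩⟩⟩⟩ <;> simp_all

lemma no_four_cycle (h2 : ∀ i j : I, i ≠ j → P i ⊓ P j = ⊥)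
    {a : G ⊕ (Σ i : I, G ⧸ P i)} {w : (cosetGraph P).Walk a a}
    (hw : w.IsCycle) (hlen : w.length = 4) : False := by
  have hc := w.isChain_adj_support
  have hnodup := hw.support_nodup
  have hl : w.support.length = 5 := by rw [SimpleGraph.Walk.length_support, hlen]
  obtain ⟨x0, x1, x2, x3, x4, hsup⟩ := list_len5 hl
  have hx0 : x0 = a := by
    have := w.support_eq_cons
    rw [hsup] at this
    exact (List.cons.inj this).1
  have hx4 : x4 = a := by
    have h := w.reverse.support_eq_cons
    rw [SimpleGraph.Walk.support_reverse, hsup] at h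
    simp only [List.reverse_cons, List.reverse_nil, List.nil_append,
      List.cons_append] at h
    exact (List.cons.inj h).1
  rw [hsup] at hc hnodup
  simp only [List.isChain_cons_cons, List.isChain_singleton, and_true] at hc
  obtain ⟨e1, e2, e3, e4⟩ := hc
  rw [hx4, ← hx0] at e4
  simp only [List.tail_cons, List.nodup_cons, List.mem_cons, List.not_mem_nil,
    List.nodup_nil, or_false, not_or, and_true] at hnodup
  obtain ⟨⟨h12, h13, h14⟩, ⟨h23, h24⟩, h34⟩ := hnodup
  have h20 : x2 ≠ x0 := by rw [hx0, ← hx4]; exact h24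
  rcases x0 with g1 | c2'
  · obtain ⟨c1, rfl, f1⟩ := helper_inl e1 rfl
    obtain ⟨g2, rfl, f2⟩ := helper_inr e2 rfl
    obtain ⟨c2, rfl, f3⟩ := helper_inl e3 rfl
    obtain ⟨g1', hg1', f4⟩ := helper_inr e4 rfl
    obtain rfl : g1 = g1' := inl.inj hg1'
    exact square_lemma h2 (fun e => h20 (by rw [e]))
      (fun e => h13 (by rw [e])) f1 f2 f4 f3
  · obtain ⟨g1, rfl, f1⟩ := helper_inr e1 rfl
    obtain ⟨c1, rfl, f2⟩ := helper_inl e2 rfl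
    obtain ⟨g2, rfl, f3⟩ := helper_inr e3 rfl
    obtain ⟨c2'', hc2'', f4⟩ := helper_inl e4 rfl
    obtain rfl : c2' = c2'' := inr.inj hc2''
    exact square_lemma h2 (fun e => h13 (by rw [e]))
      (fun e => h20 (by rw [e])) f2 f3 f1 f4

lemma no_six_cycle (h2 : ∀ i j : I, i ≠ j → P i ⊓ P j = ⊥)
    (h3 : ∀ i j k : I, i ≠ j → j ≠ k → i ≠ k →
      ∀ g : G, g ∈ (P i : Set G) * (P j : Set G) → g ∈ P k → g = 1)
    {a : G ⊕ (Σ i : I, G ⧸ P i)} {w : (cosetGraph P).Walk a a}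
    (hw : w.IsCycle) (hlen : w.length = 6) : False := by
  have hc := w.isChain_adj_support
  have hnodup := hw.support_nodup
  have hl : w.support.length = 7 := by rw [SimpleGraph.Walk.length_support, hlen]
  obtain ⟨x0, x1, x2, x3, x4, x5, x6, hsup⟩ := list_len7 hl
  have hx0 : x0 = a := by
    have := w.support_eq_cons
    rw [hsup] at this
    exact (List.cons.inj this).1
  have hx6 : x6 = a := by
    have h := w.reverse.support_eq_cons
    rw [SimpleGraph.Walk.support_reverse, hsup] at h
    simp only [List.reverse_cons, List.reverse_nil, List.nil_append,
      List.cons_append] at h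
    exact (List.cons.inj h).1
  rw [hsup] at hc hnodup
  simp only [List.isChain_cons_cons, List.isChain_singleton, and_true] at hc
  obtain ⟨e1, e2, e3, e4, e5, e6⟩ := hc
  rw [hx6, ← hx0] at e6
  simp only [List.tail_cons, List.nodup_cons, List.mem_cons, List.not_mem_nil,
    List.nodup_nil, or_false, not_or, and_true] at hnodup
  obtain ⟨⟨h12, h13, h14, h15, h16⟩, ⟨h23, h24, h25, h26⟩, ⟨h34, h35, h36⟩,
    ⟨h45, h46⟩, h56⟩ := hnodup
  have h40 : x4 ≠ x0 := by rw [hx0, ← hx6]; exact h46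
  have h20 : x2 ≠ x0 := by rw [hx0, ← hx6]; exact h26
  rcases x0 with g1 | c3'
  · obtain ⟨c1, rfl, f1⟩ := helper_inl e1 rfl
    obtain ⟨g2, rfl, f2⟩ := helper_inr e2 rfl
    obtain ⟨c2, rfl, f3⟩ := helper_inl e3 rfl
    obtain ⟨g3, rfl, f4⟩ := helper_inr e4 rfl
    obtain ⟨c3, rfl, f5⟩ := helper_inl e5 rfl
    obtain ⟨g1', hg1', f6⟩ := helper_inr e6 rfl
    obtain rfl : g1 = g1' := inl.inj hg1'
    exact hex_lemma h2 h3 (fun e => h40 (by rw [e]))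
      (fun e => h13 (by rw [e])) (fun e => h35 (by rw [e])) (fun e => h15 (by rw [e]))
      f1 f2 f3 f4 f5 f6
  · obtain ⟨g1, rfl, f6⟩ := helper_inr e1 rfl
    obtain ⟨c1, rfl, f1⟩ := helper_inl e2 rfl
    obtain ⟨g2, rfl, f2⟩ := helper_inr e3 rfl
    obtain ⟨c2, rfl, f3⟩ := helper_inl e4 rfl
    obtain ⟨g3, rfl, f4⟩ := helper_inr e5 rfl
    obtain ⟨c3'', hc3'', f5⟩ := helper_inl e6 rfl
    obtain rfl : c3' = c3'' := inr.inj hc3''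
    exact hex_lemma h2 h3 (fun e => h15 (by rw [e]))
      (fun e => h24 (by rw [e])) (fun e => h40 (by rw [e.symm]))
      (fun e => h20 (by rw [e.symm]))
      f1 f2 f3 f4 f5 f6

open SimpleGraph.Walk in
lemma edist_inl_inl
    (hd : ∀ i : I, ∀ x : G, ∃ p ∈ P i, ∃ j, ∃ q ∈ P j, x = p * q) (i0 : I) (g h : G) :
    (cosetGraph P).edist (inl g) (inl h) ≤ 4 := by
  obtain ⟨p, hp, j, q, hq, hx⟩ := hd i0 (g⁻¹ * h)
  have hh : h = (g * p) * q := by rw [mul_assoc, ← hx]; group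
  have e1 : (cosetGraph P).Adj (inl g) (inr ⟨i0, (g : G ⧸ P i0)⟩) := adj_inl_inr.mpr rfl
  have e2 : (cosetGraph P).Adj (inr ⟨i0, (g : G ⧸ P i0)⟩) (inl (g * p)) :=
    adj_inr_inl.mpr (QuotientGroup.mk_mul_of_mem g hp)
  have e3 : (cosetGraph P).Adj (inl (g * p)) (inr ⟨j, ((g * p : G) : G ⧸ P j)⟩) :=
    adj_inl_inr.mpr rfl
  have e4 : (cosetGraph P).Adj (inr ⟨j, ((g * p : G) : G ⧸ P j)⟩) (inl h) := by
    refine adj_inr_inl.mpr ?_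
    rw [hh]
    exact QuotientGroup.mk_mul_of_mem (g * p) hq
  have := SimpleGraph.edist_le (cons e1 (cons e2 (cons e3 (cons e4 nil))))
  simpa using this

open SimpleGraph.Walk in
lemma edist_inr_inl
    (hd : ∀ i : I, ∀ x : G, ∃ p ∈ P i, ∃ j, ∃ q ∈ P j, x = p * q)
    (c : Σ i : I, G ⧸ P i) (g : G) :
    (cosetGraph P).edist (inr c) (inl g) ≤ 4 := by
  obtain ⟨k, x⟩ := c
  obtain ⟨h, rfl⟩ := QuotientGroup.mk_surjective x
  obtain ⟨p, hp, j, q, hq, hx⟩ := hd k (h⁻¹ * g)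
  have hg : g = (h * p) * q := by rw [mul_assoc, ← hx]; group
  have e1 : (cosetGraph P).Adj (inr ⟨k, (h : G ⧸ P k)⟩) (inl (h * p)) :=
    adj_inr_inl.mpr (QuotientGroup.mk_mul_of_mem h hp)
  have e2 : (cosetGraph P).Adj (inl (h * p)) (inr ⟨j, ((h * p : G) : G ⧸ P j)⟩) :=
    adj_inl_inr.mpr rfl
  have e3 : (cosetGraph P).Adj (inr ⟨j, ((h * p : G) : G ⧸ P j)⟩) (inl g) := by
    refine adj_inr_inl.mpr ?_
    rw [hg]
    exact QuotientGroup.mk_mul_of_mem (h * p) hq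
  have h4 := SimpleGraph.edist_le (cons e1 (cons e2 (cons e3 nil)))
  refine le_trans h4 ?_
  simp
  norm_num

open SimpleGraph.Walk in
lemma edist_inr_inr
    (hd : ∀ i : I, ∀ x : G, ∃ p ∈ P i, ∃ j, ∃ q ∈ P j, x = p * q)
    (c c' : Σ i : I, G ⧸ P i) :
    (cosetGraph P).edist (inr c) (inr c') ≤ 4 := by
  obtain ⟨k, x⟩ := c
  obtain ⟨k', x'⟩ := c'
  obtain ⟨h, rfl⟩ := QuotientGroup.mk_surjective x
  obtain ⟨h', rfl⟩ := QuotientGroup.mk_surjective x'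
  obtain ⟨p, hp, j, q, hq, hx⟩ := hd k (h⁻¹ * h')
  have hh' : h' = (h * p) * q := by rw [mul_assoc, ← hx]; group
  have e1 : (cosetGraph P).Adj (inr ⟨k, (h : G ⧸ P k)⟩) (inl (h * p)) :=
    adj_inr_inl.mpr (QuotientGroup.mk_mul_of_mem h hp)
  have e2 : (cosetGraph P).Adj (inl (h * p)) (inr ⟨j, ((h * p : G) : G ⧸ P j)⟩) :=
    adj_inl_inr.mpr rfl
  have e3 : (cosetGraph P).Adj (inr ⟨j, ((h * p : G) : G ⧸ P j)⟩) (inl h') := by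
    refine adj_inr_inl.mpr ?_
    rw [hh']
    exact QuotientGroup.mk_mul_of_mem (h * p) hq
  have e4 : (cosetGraph P).Adj (inl h') (inr ⟨k', (h' : G ⧸ P k')⟩) :=
    adj_inl_inr.mpr rfl
  have := SimpleGraph.edist_le (cons e1 (cons e2 (cons e3 (cons e4 nil))))
  simpa using this

end CosetGraphAux

/-- Kantor's criterion: if `G` is a finite group with `|G| = (1+t)(1+st)` and
`{Pᵢ : i ∈ I}` are `s+1` subgroups of order `t+1` with `Pᵢ ∩ Pⱼ = {1}` for distinct
`i, j` and `Pᵢ Pⱼ ∩ P_k = {1}` for pairwise distinct `i, j, k`, then the coset graph is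
bipartite, every group-element vertex has degree `s+1`, every coset vertex has degree
`t+1`, the girth is at least 8 and the diameter is at most 4. -/
theorem cosetGraph_generalized_quadrangle {G : Type*} [Group G] [Finite G]
    {I : Type*} [Finite I] (P : I → Subgroup G) (s t : ℕ)
    (hI : Nat.card I = s + 1) (hP : ∀ i, Nat.card (P i) = t + 1)
    (h2 : ∀ i j : I, i ≠ j → P i ⊓ P j = ⊥)
    (h3 : ∀ i j k : I, i ≠ j → j ≠ k → i ≠ k →
      ∀ g : G, g ∈ (P i : Set G) * (P j : Set G) → g ∈ P k → g = 1)
    (hG : Nat.card G = (1 + t) * (1 + s * t)) :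
    (cosetGraph P).Colorable 2 ∧
    (∀ g : G, Nat.card ((cosetGraph P).neighborSet (Sum.inl g)) = s + 1) ∧
    (∀ c : Σ i : I, G ⧸ P i,
      Nat.card ((cosetGraph P).neighborSet (Sum.inr c)) = t + 1) ∧
    8 ≤ (cosetGraph P).egirth ∧
    (∀ u v, (cosetGraph P).edist u v ≤ 4) := by
  classical
  obtain ⟨i0⟩ : Nonempty I := (Nat.card_ne_zero.mp (by omega)).1
  have hd : ∀ i : I, ∀ x : G, ∃ p ∈ P i, ∃ j, ∃ q ∈ P j, x = p * q :=
    fun i x => CosetGraphAux.decomp hI hP h2 h3 hG i x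
  refine ⟨?_, ?_, ?_, ?_, ?_⟩
  · exact ⟨SimpleGraph.Coloring.mk (Sum.elim (fun _ => (0 : Fin 2)) (fun _ => 1)) (by
      intro a b hab
      rcases CosetGraphAux.adj_cases hab with ⟨g, i, x, ha, hb, -⟩ | ⟨g, i, x, ha, hb, -⟩ <;>
        subst ha <;> subst hb <;> simp)⟩
  · intro g
    rw [← hI]
    refine (Nat.card_eq_of_bijective
      (fun i : I => (⟨Sum.inr ⟨i, (g : G ⧸ P i)⟩, CosetGraphAux.adj_inl_inr.mpr rfl⟩ :
        (cosetGraph P).neighborSet (Sum.inl g))) ⟨?_, ?_⟩).symm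
    · intro i i' hii
      exact ((by simpa using congrArg Subtype.val hii : i = i' ∧ HEq (g : G ⧸ P i) (g : G ⧸ P i'))).1
    · rintro ⟨w, hw⟩
      rw [SimpleGraph.mem_neighborSet] at hw
      obtain ⟨⟨i, x⟩, rfl, hc⟩ := CosetGraphAux.helper_inl hw rfl
      exact ⟨i, Subtype.ext (by simp only; rw [hc])⟩
  · rintro ⟨i, x⟩
    obtain ⟨h, rfl⟩ := QuotientGroup.mk_surjective x
    rw [← hP i]
    refine (Nat.card_eq_of_bijective
      (fun p : P i => (⟨Sum.inl (h * p), CosetGraphAux.adj_inr_inl.mpr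
        (QuotientGroup.mk_mul_of_mem h p.2)⟩ :
        (cosetGraph P).neighborSet (Sum.inr ⟨i, (h : G ⧸ P i)⟩))) ⟨?_, ?_⟩).symm
    · intro p p' hpp
      have hval := congrArg Subtype.val hpp
      simp only [Sum.inl.injEq] at hval
      exact Subtype.ext (mul_left_cancel hval)
    · rintro ⟨w, hw⟩
      rw [SimpleGraph.mem_neighborSet] at hw
      obtain ⟨g, rfl, hc⟩ := CosetGraphAux.helper_inr hw rfl
      have hm : h⁻¹ * g ∈ P i := QuotientGroup.eq.mp hc.symm
      refine ⟨⟨h⁻¹ * g, hm⟩, Subtype.ext ?_⟩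
      simp only [Sum.inl.injEq]
      rw [mul_inv_cancel_left]
  · rw [SimpleGraph.le_egirth]
    intro a w hw
    have h3l := hw.three_le_length
    have hpar := CosetGraphAux.walk_parity w
    by_contra hlt
    push_neg at hlt
    have h8 : w.length < 8 := by exact_mod_cast hlt
    have heven : w.length % 2 = 0 := by omega
    have hor : w.length = 4 ∨ w.length = 6 := by omega
    rcases hor with hl | hl
    · exact CosetGraphAux.no_four_cycle h2 hw hl
    · exact CosetGraphAux.no_six_cycle h2 h3 hw hl
  · intro u v
    rcases u with g | c <;> rcases v with g' | c'
    · exact CosetGraphAux.edist_inl_inl hd i0 g g'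
    · rw [SimpleGraph.edist_comm]
      exact CosetGraphAux.edist_inr_inl hd c' g
    · exact CosetGraphAux.edist_inr_inl hd c g'
    · exact CosetGraphAux.edist_inr_inr hd c c'
end
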